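/- Let G be a simple graph admitting an integer additive set-sequential indexer f with respect to a ground set X. Let 𝓑' be the collection of nonempty subsets A of X such that A is not a non-trivial sum set in X and A is not a non-trivial summand in X, where A is a non-trivial summand in X if A ≠ {0} and A + C ⊆ X for some nonempty subset C of X with C ≠ {0}. Then G has at least |𝓑'| isolated vertices. -/

import Mathlib

open Finset Pointwise

/-- The induced edge-label map: `f⁺(uv) = f(u) + f(v)` (sum set). -/
def edgeLabel {V : Type*} (f : V → Finset ℕ) : Sym2 V → Finset ℕ :=
  Sym2.lift ⟨fun u v => f u + f v, fun u v => add_comm (f u) (f v)⟩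

/-- An integer additive set-labeling of `G` w.r.t. ground set `X`:
an injective assignment of nonempty subsets of `X` to the vertices. -/
def IsIASL {V : Type*} (X : Finset ℕ) (f : V → Finset ℕ) : Prop :=
  Function.Injective f ∧ (∀ v, (f v).Nonempty) ∧ (∀ v, f v ⊆ X)

/-- An integer additive set-indexer: an IASL whose induced edge map is
injective on the edge set. -/
def IsIASI {V : Type*} (G : SimpleGraph V) (X : Finset ℕ) (f : V → Finset ℕ) : Prop :=
  IsIASL X f ∧ Set.InjOn (edgeLabel f) G.edgeSet

/-- The family of vertex labels. -/
def vertexLabels {V : Type*} (f : V → Finset ℕ) : Set (Finset ℕ) := Set.range f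

/-- The family of edge labels. -/
def edgeLabels {V : Type*} (G : SimpleGraph V) (f : V → Finset ℕ) : Set (Finset ℕ) :=
  edgeLabel f '' G.edgeSet

/-- An integer additive set-sequential labeling: an IASI such that the vertex and
edge labels together are exactly the nonempty subsets of `X`. -/
def IsIASSL {V : Type*} (G : SimpleGraph V) (X : Finset ℕ) (f : V → Finset ℕ) : Prop :=
  IsIASI G X f ∧
    vertexLabels f ∪ edgeLabels G f = {A : Finset ℕ | A ⊆ X ∧ A.Nonempty}

/-- An integer additive set-sequential indexer: an IASSL whose vertex labels and
edge labels are disjoint (equivalently, the combined map `f*` is injective). -/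
def IsIASSI {V : Type*} (G : SimpleGraph V) (X : Finset ℕ) (f : V → Finset ℕ) : Prop :=
  IsIASSL G X f ∧ Disjoint (vertexLabels f) (edgeLabels G f)

/-- A nonempty subset `A` of `X` is a non-trivial sum set in `X` if `A = B + C`
for nonempty subsets `B, C ⊆ X`, neither equal to `{0}`. -/
def IsNontrivialSumset (X A : Finset ℕ) : Prop :=
  ∃ B C : Finset ℕ, B.Nonempty ∧ C.Nonempty ∧ B ⊆ X ∧ C ⊆ X ∧
    B ≠ {0} ∧ C ≠ {0} ∧ A = B + C

/-- A nonempty subset `A` of `X` is a non-trivial summand in `X` if `A ≠ {0}`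
and `A + C ⊆ X` for some nonempty subset `C ⊆ X` with `C ≠ {0}`. -/
def IsNontrivialSummand (X A : Finset ℕ) : Prop :=
  A ≠ {0} ∧ ∃ C : Finset ℕ, C.Nonempty ∧ C ⊆ X ∧ C ≠ {0} ∧ A + C ⊆ X

/-- A graph admitting an IASSI has at least `|𝓑'|` isolated vertices, where `𝓑'`
is the family of nonempty subsets of `X` that are neither non-trivial sum sets
nor non-trivial summands in `X`. -/
theorem iassi_isolated_bound {V : Type*} [Fintype V] (G : SimpleGraph V)
    [DecidableRel G.Adj] (X : Finset ℕ) (hX : X.Nonempty)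
    (f : V → Finset ℕ) (h : IsIASSI G X f) :
    {A : Finset ℕ | A ⊆ X ∧ A.Nonempty ∧ ¬ IsNontrivialSumset X A ∧
        ¬ IsNontrivialSummand X A}.ncard ≤
      {v : V | G.degree v = 0}.ncard := by
  classical
  obtain ⟨⟨⟨⟨hinj, hne, hsub⟩, _⟩, hunion⟩, hdisj⟩ := h
  have zadd : ∀ B : Finset ℕ, ({0} : Finset ℕ) + B = B := by
    intro B; ext x; simp [Finset.mem_add]
  have addz : ∀ B : Finset ℕ, B + ({0} : Finset ℕ) = B := by
    intro B; ext x; simp [Finset.mem_add]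
  set S := {A : Finset ℕ | A ⊆ X ∧ A.Nonempty ∧ ¬ IsNontrivialSumset X A ∧
      ¬ IsNontrivialSummand X A} with hS
  have key : ∀ A ∈ S, ∃ v, f v = A ∧ G.degree v = 0 := by
    intro A hA
    obtain ⟨hAX, hAne, hAns, hAnsm⟩ := hA
    have hmem : A ∈ vertexLabels f ∪ edgeLabels G f := by
      rw [hunion]; exact ⟨hAX, hAne⟩
    have hv : A ∈ vertexLabels f := by
      rcases hmem with hv | he
      · exact hv
      · exfalso
        obtain ⟨e, heE, heA⟩ := he
        induction e using Sym2.ind with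
        | _ u w =>
          have hlab : f u + f w = A := heA
          by_cases hu0 : f u = {0}
          · apply hdisj.ne_of_mem (a := A) ⟨w, ?_⟩ ⟨s(u, w), heE, heA⟩ rfl
            rw [← hlab, hu0, zadd]
          · by_cases hw0 : f w = {0}
            · apply hdisj.ne_of_mem (a := A) ⟨u, ?_⟩ ⟨s(u, w), heE, heA⟩ rfl
              rw [← hlab, hw0, addz]
            · exact hAns ⟨f u, f w, hne u, hne w, hsub u, hsub w, hu0, hw0, hlab.symm⟩
    obtain ⟨v, hvA⟩ := hv
    refine ⟨v, hvA, ?_⟩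
    by_contra hdeg
    obtain ⟨u, hadj⟩ : ∃ u, G.Adj v u := by
      by_contra hno
      push_neg at hno
      exact hdeg (Finset.card_eq_zero.mpr (Finset.eq_empty_of_forall_notMem
        (fun w hw => hno w ((SimpleGraph.mem_neighborFinset _ _ _).mp hw))))
    have heE : s(v, u) ∈ G.edgeSet := hadj
    have hlabE : f v + f u ∈ edgeLabels G f := ⟨s(v, u), heE, rfl⟩
    have hlabX : f v + f u ⊆ X := by
      have : f v + f u ∈ vertexLabels f ∪ edgeLabels G f := Or.inr hlabE
      rw [hunion] at this; exact this.1
    by_cases hv0 : f v = {0}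
    · exact hdisj.ne_of_mem (a := f u) ⟨u, rfl⟩ (by rw [← zadd (f u), ← hv0]; exact hlabE) rfl
    · by_cases hu0 : f u = {0}
      · exact hdisj.ne_of_mem (a := f v) ⟨v, rfl⟩ (by rw [← addz (f v), ← hu0]; exact hlabE) rfl
      · exact hAnsm ⟨hvA ▸ hv0, f u, hne u, hsub u, hu0, hvA ▸ hlabX⟩
  rcases S.eq_empty_or_nonempty with hSe | hSne
  · simp [hSe]
  · have : Nonempty V := by
      obtain ⟨A, hA⟩ := hSne
      obtain ⟨v, _⟩ := key A hA
      exact ⟨v⟩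
    have g : ∀ A : Finset ℕ, ∃ v : V, A ∈ S → f v = A ∧ G.degree v = 0 := by
      intro A
      by_cases hA : A ∈ S
      · obtain ⟨v, hv⟩ := key A hA; exact ⟨v, fun _ => hv⟩
      · exact ⟨Classical.arbitrary V, fun h => absurd h hA⟩
    choose g hg using g
    apply Set.ncard_le_ncard_of_injOn g
    · intro A hA; exact (hg A hA).2
    · intro A hA B hB hgAB
      rw [← (hg A hA).1, ← (hg B hB).1, hgAB]
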